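/- Let α > 1, g₂ < s < g₁, p₀ ∈ (0,1), and K > 0 a constant. For ε with both p₀+ε and p₀−ε in (0,1), define V(ε) = p₀g₁ + (1-p₀)g₂ + K·[ −(α/(α+1))·((1-p₀-ε)/(p₀+ε))^{α+1} + ((1-p₀)/p₀)·((1-p₀-ε)/(p₀+ε))^{α} ]. Then for every ε > 0 with 0 < p₀ − ε and p₀ + ε < 1, we have V(ε) > V(−ε). -/

import Mathlib

theorem optimist_beats_pessimist (α s g₁ g₂ p₀ K : ℝ) (hα : 1 < α)
    (h₂ : g₂ < s) (h₁ : s < g₁) (hp₀ : p₀ ∈ Set.Ioo (0 : ℝ) 1) (hK : 0 < K)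
    (V : ℝ → ℝ)
    (hV : V = fun ε => p₀ * g₁ + (1 - p₀) * g₂ +
      K * (-(α / (α + 1)) * ((1 - p₀ - ε) / (p₀ + ε)) ^ (α + 1)
        + ((1 - p₀) / p₀) * ((1 - p₀ - ε) / (p₀ + ε)) ^ α)) :
    ∀ ε : ℝ, 0 < ε → 0 < p₀ - ε → p₀ + ε < 1 → V ε > V (-ε) := by
  obtain ⟨hp0, hp1⟩ := hp₀
  intro ε hε hpe hpe'
  have hp0' : p₀ ≠ 0 := ne_of_gt hp0
  have hα0 : (0:ℝ) < α := by linarith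
  have hα1 : α + 1 ≠ 0 := by positivity
  set W : ℝ → ℝ := fun t => -(α / (α + 1)) * ((1 - p₀ - t) / (p₀ + t)) ^ (α + 1)
        + ((1 - p₀) / p₀) * ((1 - p₀ - t) / (p₀ + t)) ^ α with hW
  set W' : ℝ → ℝ := fun t => α * ((1 - p₀ - t) / (p₀ + t)) ^ (α - 1) *
        ((1 - p₀ - t) / (p₀ + t) - (1 - p₀) / p₀) / (p₀ + t) ^ 2 with hW'
  have key : ∀ t : ℝ, 0 < p₀ + t → p₀ + t < 1 → HasDerivAt W (W' t) t := by
    intro t h1 h2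
    have hden : p₀ + t ≠ 0 := ne_of_gt h1
    have hnum : 0 < 1 - p₀ - t := by linarith
    have hupos : 0 < (1 - p₀ - t) / (p₀ + t) := div_pos hnum h1
    have hu : HasDerivAt (fun x : ℝ => (1 - p₀ - x) / (p₀ + x)) (-1 / (p₀ + t) ^ 2) t := by
      have hnumd : HasDerivAt (fun x : ℝ => 1 - p₀ - x) (-1) t := by
        simpa using (hasDerivAt_id t).const_sub (1 - p₀)
      have hdend : HasDerivAt (fun x : ℝ => p₀ + x) 1 t := by
        simpa using (hasDerivAt_id t).const_add p₀
      have h := hnumd.div hdend hden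
      refine h.congr_deriv ?_
      ring
    have hr1 : HasDerivAt (fun y : ℝ => y ^ (α + 1))
        ((α + 1) * ((1 - p₀ - t) / (p₀ + t)) ^ α) ((1 - p₀ - t) / (p₀ + t)) := by
      have h := Real.hasDerivAt_rpow_const (x := (1 - p₀ - t) / (p₀ + t)) (p := α + 1)
        (Or.inl (ne_of_gt hupos))
      simpa using h
    have hr2 : HasDerivAt (fun y : ℝ => y ^ α)
        (α * ((1 - p₀ - t) / (p₀ + t)) ^ (α - 1)) ((1 - p₀ - t) / (p₀ + t)) :=
      Real.hasDerivAt_rpow_const (Or.inl (ne_of_gt hupos))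
    have h3 := ((hr1.comp t hu).const_mul (-(α / (α + 1)))).add
      ((hr2.comp t hu).const_mul ((1 - p₀) / p₀))
    refine h3.congr_deriv ?_
    have hid : ((1 - p₀ - t) / (p₀ + t)) ^ α
        = ((1 - p₀ - t) / (p₀ + t)) ^ (α - 1) * ((1 - p₀ - t) / (p₀ + t)) := by
      nth_rewrite 1 [show α = α - 1 + 1 by ring]
      rw [Real.rpow_add_one (ne_of_gt hupos)]
    rw [hW', hid]
    field_simp
    ring
  set D : ℝ → ℝ := fun t => W t - W (-t) with hD
  have hDderiv : ∀ t : ℝ, -ε ≤ t → t ≤ ε → HasDerivAt D (W' t + W' (-t)) t := by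
    intro t ht1 ht2
    have k1 := key t (by linarith) (by linarith)
    have k2 := key (-t) (by linarith) (by linarith)
    have hneg : HasDerivAt (fun x : ℝ => W (-x)) (W' (-t) * (-1)) t :=
      k2.comp t (hasDerivAt_neg t)
    have h := k1.sub hneg
    refine h.congr_deriv ?_
    ring
  have hpos : ∀ t : ℝ, 0 < t → t < ε → 0 < W' t + W' (-t) := by
    intro t ht hte
    have h1 : 0 < p₀ + t := by linarith
    have h2 : 0 < p₀ - t := by linarith
    have h3 : 0 < 1 - p₀ - t := by linarith
    have h4 : 0 < 1 - p₀ + t := by linarith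
    have hA : (0:ℝ) < (1 - p₀ - t) / (p₀ + t) := div_pos h3 h1
    have hBpos : (0:ℝ) < (1 - p₀ + t) / (p₀ - t) := div_pos h4 h2
    have hB : (1 - p₀ - t) / (p₀ + t) < (1 - p₀ + t) / (p₀ - t) := by
      rw [div_lt_div_iff₀ h1 h2]; nlinarith
    have hAB : ((1 - p₀ - t) / (p₀ + t)) ^ (α - 1) < ((1 - p₀ + t) / (p₀ - t)) ^ (α - 1) :=
      Real.rpow_lt_rpow (le_of_lt hA) hB (by linarith)
    have hApow : (0:ℝ) < ((1 - p₀ - t) / (p₀ + t)) ^ (α - 1) := Real.rpow_pos_of_pos hA _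
    have hWt : W' t = -(α * t * ((1 - p₀ - t) / (p₀ + t)) ^ (α - 1) / (p₀ * (p₀ + t) ^ 3)) := by
      simp only [hW']
      rw [show (1 - p₀ - t) / (p₀ + t) - (1 - p₀) / p₀ = -(t / (p₀ * (p₀ + t))) from by
        field_simp; ring]
      field_simp
    have hWmt : W' (-t) = α * t * ((1 - p₀ + t) / (p₀ - t)) ^ (α - 1) / (p₀ * (p₀ - t) ^ 3) := by
      simp only [hW']
      rw [show (1 - p₀ - -t) / (p₀ + -t) = (1 - p₀ + t) / (p₀ - t) from by ring_nf]
      rw [show (1 - p₀ + t) / (p₀ - t) - (1 - p₀) / p₀ = t / (p₀ * (p₀ - t)) from by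
        field_simp; ring]
      rw [show p₀ + -t = p₀ - t from by ring]
      field_simp
    rw [hWt, hWmt]
    have hXY : α * t * ((1 - p₀ - t) / (p₀ + t)) ^ (α - 1) / (p₀ * (p₀ + t) ^ 3)
        < α * t * ((1 - p₀ + t) / (p₀ - t)) ^ (α - 1) / (p₀ * (p₀ - t) ^ 3) := by
      rw [div_lt_div_iff₀ (by positivity) (by positivity)]
      have hBpow : (0:ℝ) < ((1 - p₀ + t) / (p₀ - t)) ^ (α - 1) := Real.rpow_pos_of_pos hBpos _
      have s1 : α * t * ((1 - p₀ - t) / (p₀ + t)) ^ (α - 1)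
          < α * t * ((1 - p₀ + t) / (p₀ - t)) ^ (α - 1) :=
        mul_lt_mul_of_pos_left hAB (mul_pos hα0 ht)
      calc α * t * ((1 - p₀ - t) / (p₀ + t)) ^ (α - 1) * (p₀ * (p₀ - t) ^ 3)
          < α * t * ((1 - p₀ + t) / (p₀ - t)) ^ (α - 1) * (p₀ * (p₀ - t) ^ 3) :=
            mul_lt_mul_of_pos_right s1 (by positivity)
        _ ≤ α * t * ((1 - p₀ + t) / (p₀ - t)) ^ (α - 1) * (p₀ * (p₀ + t) ^ 3) := by
            apply mul_le_mul_of_nonneg_left _ (by positivity)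
            apply mul_le_mul_of_nonneg_left _ (le_of_lt hp0)
            exact pow_le_pow_left₀ (le_of_lt h2) (by linarith) 3
    linarith
  have hmono : StrictMonoOn D (Set.Icc 0 ε) := by
    apply strictMonoOn_of_deriv_pos (convex_Icc 0 ε)
    · intro x hx
      exact (hDderiv x (by linarith [hx.1]) hx.2).continuousAt.continuousWithinAt
    · intro x hx
      rw [interior_Icc] at hx
      rw [(hDderiv x (by linarith [hx.1]) (le_of_lt hx.2)).deriv]
      exact hpos x hx.1 hx.2
  have hD0 : D 0 = 0 := by simp [hD]
  have hDε : 0 < D ε := by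
    have h := hmono (Set.left_mem_Icc.mpr (le_of_lt hε)) (Set.right_mem_Icc.mpr (le_of_lt hε)) hε
    rw [hD0] at h
    exact h
  have hWlt : W (-ε) < W ε := by
    have := hDε
    rw [hD] at this
    dsimp at this
    linarith
  subst hV
  show p₀ * g₁ + (1 - p₀) * g₂ + K * W ε > p₀ * g₁ + (1 - p₀) * g₂ + K * W (-ε)
  have := mul_lt_mul_of_pos_left hWlt hK
  linarith
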